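/- Let φ = (1+√5)/2, R = diag(e^{-4πi/5}, e^{3πi/5}), F = [[φ⁻¹, φ^{-1/2}], [φ^{-1/2}, -φ⁻¹]], and B = F·R·F. Then there exists a nonzero complex scalar c such that R⁻⁴·B applied to the vector (1, 0) equals c·(1, -φ^{1/2}). (That is, the braid σ₁⁻⁴σ₂ applied to the qubit state |0⟩ produces the state |β⟩ = (1, -φ^{1/2}), up to a scalar.) -/

import Mathlib

open Matrix

/-- The golden ratio φ = (1 + √5)/2. -/
noncomputable def φ : ℝ := (1 + Real.sqrt 5) / 2

/-- The Fibonacci R-matrix `R = diag(e^{-4πi/5}, e^{3πi/5})`, the action of σ₁. -/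
noncomputable def R : Matrix (Fin 2) (Fin 2) ℂ :=
  !![Complex.exp (-(4 * Real.pi * Complex.I) / 5), 0;
     0, Complex.exp (3 * Real.pi * Complex.I / 5)]

/-- The Fibonacci F-matrix, as a complex matrix. -/
noncomputable def F : Matrix (Fin 2) (Fin 2) ℂ :=
  !![((φ⁻¹ : ℝ) : ℂ), (((Real.sqrt φ)⁻¹ : ℝ) : ℂ);
     (((Real.sqrt φ)⁻¹ : ℝ) : ℂ), -((φ⁻¹ : ℝ) : ℂ)]

/-- The action of σ₂ on the encoded qubit: `B = F·R·F`. -/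
noncomputable def B : Matrix (Fin 2) (Fin 2) ℂ := F * R * F

lemma phi_pos : 0 < φ := by
  unfold φ
  have : 0 < Real.sqrt 5 := Real.sqrt_pos.mpr (by norm_num)
  linarith

lemma phi_sq : φ ^ 2 = φ + 1 := by
  unfold φ
  have h : Real.sqrt 5 ^ 2 = 5 := Real.sq_sqrt (by norm_num)
  nlinarith [h]

lemma Rinv_eq : R⁻¹ = !![Complex.exp (4 * Real.pi * Complex.I / 5), 0;
     0, Complex.exp (-(3 * Real.pi * Complex.I) / 5)] := by
  apply Matrix.inv_eq_right_inv
  ext i j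
  fin_cases i <;> fin_cases j <;>
    simp [R, Matrix.mul_apply, Fin.sum_univ_two, ← Complex.exp_add]
  · rw [show (-(4 * (Real.pi:ℂ) * Complex.I) / 5 + 4 * Real.pi * Complex.I / 5 : ℂ) = 0 by ring,
      Complex.exp_zero]
  · rw [show (3 * (Real.pi:ℂ) * Complex.I / 5 + -(3 * Real.pi * Complex.I) / 5 : ℂ) = 0 by ring,
      Complex.exp_zero]

/-- The braid σ₁⁻⁴σ₂ applied to |0⟩ = (1,0) produces |β⟩ = (1, -φ^{1/2}) up to a
nonzero scalar. -/
theorem braid_creates_beta :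
    ∃ c : ℂ, c ≠ 0 ∧
      (R⁻¹ ^ 4 * B) *ᵥ ![1, 0] = c • ![(1 : ℂ), -((Real.sqrt φ : ℝ) : ℂ)] := by
  set x : ℂ := Complex.exp (Real.pi * Complex.I / 5) with hxdef
  have hx0 : x ≠ 0 := Complex.exp_ne_zero _
  have hx5 : x ^ 5 = -1 := by
    rw [hxdef, ← Complex.exp_nat_mul]
    rw [show (5:ℕ) * ((Real.pi:ℂ) * Complex.I / 5) = Real.pi * Complex.I by push_cast; ring]
    exact Complex.exp_pi_mul_I
  have hφsq : ((φ:ℝ):ℂ) ^ 2 = ((φ:ℝ):ℂ) + 1 := by exact_mod_cast congrArg (Complex.ofReal) phi_sq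
  have hφ0 : ((φ:ℝ):ℂ) ≠ 0 := by exact_mod_cast phi_pos.ne'
  set s : ℂ := ((Real.sqrt φ : ℝ) : ℂ) with hsdef
  have hs2 : s ^ 2 = ((φ:ℝ):ℂ) := by
    rw [hsdef]; norm_cast; exact Real.sq_sqrt phi_pos.le
  have hs0 : s ≠ 0 := by
    rw [hsdef]; exact_mod_cast (Real.sqrt_pos.mpr phi_pos).ne'
  have hx2 : x ^ 2 = ((φ:ℝ):ℂ) * x - 1 := by
    have hcos : Real.cos (Real.pi / 5) = φ / 2 := by
      rw [Real.cos_pi_div_five]; unfold φ; ring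
    have hpyth : ((Real.sin (Real.pi/5) : ℝ):ℂ)^2 + ((Real.cos (Real.pi/5) : ℝ):ℂ)^2 = 1 := by
      norm_cast; exact Real.sin_sq_add_cos_sq _
    have hφc : ((φ:ℝ):ℂ) = 2 * ((Real.cos (Real.pi/5) : ℝ):ℂ) := by
      norm_cast; rw [hcos]; ring
    have hx : x = ((Real.cos (Real.pi/5) : ℝ):ℂ) + ((Real.sin (Real.pi/5) : ℝ):ℂ) * Complex.I := by
      rw [hxdef, show (Real.pi:ℂ) * Complex.I / 5 = ((Real.pi / 5 : ℝ) : ℂ) * Complex.I by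
        push_cast; ring, Complex.exp_mul_I, Complex.ofReal_cos, Complex.ofReal_sin]
    rw [hx, hφc]
    linear_combination ((Real.sin (Real.pi/5) : ℝ):ℂ)^2 * Complex.I_sq - hpyth
  have hx3 : x ^ 3 = ((φ:ℝ):ℂ) * x - ((φ:ℝ):ℂ) := by
    linear_combination (x + ((φ:ℝ):ℂ)) * hx2 + x * hφsq
  have hx4 : x ^ 4 = x - ((φ:ℝ):ℂ) := by
    linear_combination x * hx3 + ((φ:ℝ):ℂ) * hx2 + x * hφsq
  -- exponential rewrites
  have hneg : Complex.exp (-((Real.pi:ℂ) * Complex.I)) = -1 := by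
    rw [Complex.exp_neg, Complex.exp_pi_mul_I]; norm_num
  have hA : Complex.exp (4 * (Real.pi:ℂ) * Complex.I / 5) = x ^ 4 := by
    rw [hxdef, ← Complex.exp_nat_mul]; ring_nf
  have hD : Complex.exp (3 * (Real.pi:ℂ) * Complex.I / 5) = x ^ 3 := by
    rw [hxdef, ← Complex.exp_nat_mul]; ring_nf
  have hC : Complex.exp (-(4 * (Real.pi:ℂ) * Complex.I) / 5) = -x := by
    rw [show -(4 * (Real.pi:ℂ) * Complex.I) / 5
        = (Real.pi:ℂ) * Complex.I / 5 + -((Real.pi:ℂ) * Complex.I) by ring,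
      Complex.exp_add, hneg, ← hxdef]; ring
  have hB : Complex.exp (-(3 * (Real.pi:ℂ) * Complex.I) / 5) = -x ^ 2 := by
    rw [show -(3 * (Real.pi:ℂ) * Complex.I) / 5
        = (2:ℕ) * ((Real.pi:ℂ) * Complex.I / 5) + -((Real.pi:ℂ) * Complex.I) by push_cast; ring,
      Complex.exp_add, Complex.exp_nat_mul, hneg, ← hxdef]; ring
  refine ⟨((φ:ℝ):ℂ)⁻¹, inv_ne_zero hφ0, ?_⟩
  rw [Rinv_eq]
  funext i
  fin_cases i <;>
    simp [B, F, R, Matrix.mulVec, Matrix.mul_apply, Fin.sum_univ_two, dotProduct,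
      pow_succ, hA, hB, hC, hD, ← hsdef]
  · have hx16 : x ^ 16 = -x := by linear_combination (x^11 - x^6 + x) * hx5
    have g0 : x ^ 16 * (-(((φ:ℝ):ℂ)⁻¹ * x * ((φ:ℝ):ℂ)⁻¹) + s⁻¹ * x ^ 3 * s⁻¹) = ((φ:ℝ):ℂ)⁻¹ := by
      rw [hx16]
      field_simp
      linear_combination (x^2 - ((φ:ℝ):ℂ)) * hs2 - ((φ:ℝ):ℂ)^2 * hx4
        + ((φ:ℝ):ℂ) * hx2 + ((φ:ℝ):ℂ) * hφsq
    linear_combination g0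
  · have hx8 : x ^ 8 = -x ^ 3 := by linear_combination x^3 * hx5
    have g1 : x ^ 8 * (-(s⁻¹ * x * ((φ:ℝ):ℂ)⁻¹) + -(((φ:ℝ):ℂ)⁻¹ * x ^ 3 * s⁻¹))
        = -(((φ:ℝ):ℂ)⁻¹ * s) := by
      rw [hx8]
      field_simp
      linear_combination x * hx5 + hx4
        + hs2
    linear_combination g1
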